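/- arXiv:1310.6950 — 3 statements merged into one kernel-verified Lean document; each statement's English description precedes it below -/
import Mathlib

section
/- If a real n×n matrix A is eventually strictly J-sign-symmetric, then there exists a positive integer k such that A^k and A^{k+1} have the same sign pattern, i.e., sgn((A^k)_{ij}) = sgn((A^{k+1})_{ij}) for all i,j, and both A^k and A^{k+1} are strictly J-sign-symmetric. -/
open Matrix Polynomial Filter

variable {n : ℕ}

/-- The minor of `A` with row set `r` and column set `c` (taken in increasing order). -/
noncomputable def minor (A : Matrix (Fin n) (Fin n) ℝ) (r c : Finset (Fin n))
    (h : c.card = r.card) : ℝ :=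
  (A.submatrix (fun i : Fin r.card => (r.orderIsoOfFin rfl i).1)
      (fun i : Fin r.card => (c.orderIsoOfFin h i).1)).det

/-- The `j`-th compound matrix of `A`: the matrix of all `j × j` minors of `A`,
indexed by the `j`-element subsets of `Fin n` (ordered increasingly). -/
noncomputable def compound (A : Matrix (Fin n) (Fin n) ℝ) (j : ℕ) :
    Matrix {s : Finset (Fin n) // s.card = j} {s : Finset (Fin n) // s.card = j} ℝ :=
  Matrix.of fun r c =>
    (A.submatrix (fun i : Fin j => (r.1.orderIsoOfFin r.2 i).1)
      (fun i : Fin j => (c.1.orderIsoOfFin c.2 i).1)).det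

/-- Characteristic polynomial of a real matrix, viewed over `ℂ`. -/
noncomputable def charC {m : Type*} [Fintype m] [DecidableEq m] (A : Matrix m m ℝ) :
    Polynomial ℂ :=
  (A.map (Complex.ofReal)).charpoly

/-- `lam` is a positive simple strictly dominant eigenvalue of `A` with a strictly
positive eigenvector (the strong Perron–Frobenius property, with specified value). -/
def StrongPFAt {m : Type*} [Fintype m] [DecidableEq m] (A : Matrix m m ℝ) (lam : ℝ) : Prop :=
  0 < lam ∧ (charC A).IsRoot (lam : ℂ) ∧ (charC A).rootMultiplicity (lam : ℂ) = 1 ∧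
    (∀ μ : ℂ, (charC A).IsRoot μ → μ ≠ (lam : ℂ) → ‖μ‖ < lam) ∧
    ∃ v : m → ℝ, (∀ i, 0 < v i) ∧ A *ᵥ v = lam • v

/-- The strong Perron–Frobenius property. -/
def StrongPF {m : Type*} [Fintype m] [DecidableEq m] (A : Matrix m m ℝ) : Prop :=
  ∃ lam : ℝ, StrongPFAt A lam

/-- `M` is strictly `J`-sign-symmetric (for the given set `J`). -/
def SJSWith (J : Finset (Fin n)) (M : Matrix (Fin n) (Fin n) ℝ) : Prop :=
  ∀ i j : Fin n, ((i ∈ J ↔ j ∈ J) → 0 < M i j) ∧ (¬(i ∈ J ↔ j ∈ J) → M i j < 0)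

/-- `M` is strictly J-sign-symmetric for some `J ⊆ {1,…,n}`. -/
def SJS (M : Matrix (Fin n) (Fin n) ℝ) : Prop :=
  ∃ J : Finset (Fin n), SJSWith J M

/-- Eventually strictly J-sign-symmetric. -/
def ESJS (A : Matrix (Fin n) (Fin n) ℝ) : Prop :=
  ∃ k0 : ℕ, ∀ k ≥ k0, SJS (A ^ k)

/-- Eventually (entrywise) positive. -/
def EvPos {m : Type*} [Fintype m] [DecidableEq m] (A : Matrix m m ℝ) : Prop :=
  ∃ k0 : ℕ, ∀ k ≥ k0, ∀ i j, 0 < (A ^ k) i j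

/-- Strictly totally positive: all minors of all orders are positive. -/
def STP (A : Matrix (Fin n) (Fin n) ℝ) : Prop :=
  ∀ (r c : Finset (Fin n)) (h : c.card = r.card), r.Nonempty → 0 < minor A r c h

/-- Totally nonnegative: all minors of all orders are nonnegative. -/
def TotNonneg (A : Matrix (Fin n) (Fin n) ℝ) : Prop :=
  ∀ (r c : Finset (Fin n)) (h : c.card = r.card), 0 ≤ minor A r c h

/-- Eventually strictly totally positive. -/
def ESTP (A : Matrix (Fin n) (Fin n) ℝ) : Prop :=
  ∃ k0 : ℕ, ∀ k ≥ k0, STP (A ^ k)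

/-- The checkerboard transform `S* = ((-1)^(i+j) s_ij)`. -/
def checker (S : Matrix (Fin n) (Fin n) ℝ) : Matrix (Fin n) (Fin n) ℝ :=
  Matrix.of fun i j => (-1 : ℝ) ^ ((i : ℕ) + (j : ℕ)) * S i j

/-- The exterior product `x₀ ∧ ⋯ ∧ x_{j-1}` of the first `j` of the vectors `x`,
as a vector indexed by `j`-element subsets of `Fin n`. -/
noncomputable def wedge (x : Fin n → Fin n → ℝ) (j : ℕ) (hj : j ≤ n) :
    {s : Finset (Fin n) // s.card = j} → ℝ :=
  fun s => (Matrix.of fun a b : Fin j => x (Fin.castLE hj b) (s.1.orderIsoOfFin s.2 a).1).det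


lemma sjs_mul {n : ℕ} {J : Finset (Fin n)} {M N : Matrix (Fin n) (Fin n) ℝ}
    (hM : SJSWith J M) (hN : SJSWith J N) : SJSWith J (M * N) := by
  intro i j
  have hne : (Finset.univ : Finset (Fin n)).Nonempty := ⟨i, Finset.mem_univ i⟩
  constructor
  · intro hij
    rw [Matrix.mul_apply]
    apply Finset.sum_pos _ hne
    intro l _
    by_cases hl : (i ∈ J ↔ l ∈ J)
    · exact mul_pos ((hM i l).1 hl) ((hN l j).1 (hl.symm.trans hij))
    · exact mul_pos_of_neg_of_neg ((hM i l).2 hl) ((hN l j).2 (by tauto))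
  · intro hij
    rw [Matrix.mul_apply]
    have : ∀ l ∈ (Finset.univ : Finset (Fin n)), M i l * N l j < 0 := by
      intro l _
      by_cases hl : (i ∈ J ↔ l ∈ J)
      · exact mul_neg_of_pos_of_neg ((hM i l).1 hl) ((hN l j).2 (by tauto))
      · exact mul_neg_of_neg_of_pos ((hM i l).2 hl) ((hN l j).1 (by tauto))
    exact Finset.sum_neg this hne

lemma sjs_pow {n : ℕ} {J : Finset (Fin n)} {M : Matrix (Fin n) (Fin n) ℝ}
    (hM : SJSWith J M) : ∀ m : ℕ, 1 ≤ m → SJSWith J (M ^ m) := by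
  intro m hm
  induction m with
  | zero => omega
  | succ p ih =>
    rcases Nat.eq_or_lt_of_le hm with h1 | h1
    · simpa [← h1] using hM
    · rw [pow_succ]
      exact sjs_mul (ih (by omega)) hM

/-- an eventually strictly J-sign-symmetric matrix has two consecutive
powers which are strictly J-sign-symmetric with the same sign pattern. -/
theorem stmt4 (A : Matrix (Fin n) (Fin n) ℝ) (h : ESJS A) :
    ∃ k : ℕ, 0 < k ∧
      (∀ i j, Real.sign ((A ^ k) i j) = Real.sign ((A ^ (k + 1)) i j)) ∧
      SJS (A ^ k) ∧ SJS (A ^ (k + 1)) := by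
  obtain ⟨k0, hk0⟩ := h
  set k := max k0 1 with hk
  have hk1 : 1 ≤ k := le_max_right _ _
  obtain ⟨J1, hJ1⟩ := hk0 k (le_max_left _ _)
  obtain ⟨J2, hJ2⟩ := hk0 (k + 1) (le_trans (le_max_left _ _) (Nat.le_succ k))
  refine ⟨k, hk1, ?_, ⟨J1, hJ1⟩, ⟨J2, hJ2⟩⟩
  have hp1 : SJSWith J1 (A ^ (k * (k + 1))) := by
    rw [pow_mul]; exact sjs_pow hJ1 (k + 1) (by omega)
  have hp2 : SJSWith J2 (A ^ (k * (k + 1))) := by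
    rw [mul_comm, pow_mul]; exact sjs_pow hJ2 k hk1
  intro i j
  have key : (i ∈ J1 ↔ j ∈ J1) ↔ (i ∈ J2 ↔ j ∈ J2) := by
    by_cases h1 : (i ∈ J1 ↔ j ∈ J1) <;> by_cases h2 : (i ∈ J2 ↔ j ∈ J2) <;>
      first
        | tauto
        | (exfalso; first
            | linarith [(hp1 i j).1 h1, (hp2 i j).2 h2]
            | linarith [(hp1 i j).2 h1, (hp2 i j).1 h2])
  by_cases hij : i ∈ J1 ↔ j ∈ J1
  · rw [Real.sign_of_pos ((hJ1 i j).1 hij), Real.sign_of_pos ((hJ2 i j).1 (key.mp hij))]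
  · rw [Real.sign_of_neg ((hJ1 i j).2 hij),
      Real.sign_of_neg ((hJ2 i j).2 (fun h => hij (key.mpr h)))]
end

section
/- If A and B are eventually strictly totally positive n×n matrices and AB = BA, then AB is eventually strictly totally positive. -/
open Matrix Polynomial Filter

variable {n : ℕ}

open Matrix Finset Equiv

theorem step1 {j N : ℕ} (M : Matrix (Fin j) (Fin N) ℝ) (P : Matrix (Fin N) (Fin j) ℝ) :
    (M * P).det = ∑ p : Fin j → Fin N, (∏ i, M i (p i)) * (P.submatrix p id).det := by
  have h1 : (M * P) = Matrix.of fun i => ∑ k, M i k • P k := by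
    ext i c; simp [Matrix.mul_apply]
  rw [h1]
  have := (Matrix.detRowAlternating (R := ℝ) (n := Fin j)).toMultilinearMap.map_sum
    (g := fun i k => M i k • P k)
  rw [show Matrix.det (Matrix.of fun i => ∑ k, M i k • P k)
      = (Matrix.detRowAlternating (R := ℝ) (n := Fin j)).toMultilinearMap
        (fun i => ∑ k, M i k • P k) from rfl, this]
  refine Fintype.sum_congr _ _ fun p => ?_
  rw [(Matrix.detRowAlternating (R := ℝ) (n := Fin j)).toMultilinearMap.map_smul_univ]
  rfl

lemma image_phi {N j : ℕ} (s : {s : Finset (Fin N) // s.card = j}) (σ : Perm (Fin j)) :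
    univ.image (fun i => ((s.1.orderIsoOfFin s.2) (σ i) : Fin N)) = s.1 := by
  ext x
  simp only [mem_image, mem_univ, true_and]
  constructor
  · rintro ⟨i, rfl⟩; exact Finset.coe_mem _
  · intro hx
    exact ⟨σ.symm ((s.1.orderIsoOfFin s.2).symm ⟨x, hx⟩), by simp⟩

theorem cauchyBinet {j N : ℕ} (M : Matrix (Fin j) (Fin N) ℝ) (P : Matrix (Fin N) (Fin j) ℝ) :
    (M * P).det = ∑ s : {s : Finset (Fin N) // s.card = j},
      (M.submatrix id fun i => ((s.1.orderIsoOfFin s.2) i : Fin N)).det *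
      (P.submatrix (fun i => ((s.1.orderIsoOfFin s.2) i : Fin N)) id).det := by
  classical
  rw [step1]
  rw [← Finset.sum_filter_add_sum_filter_not Finset.univ (fun p => Function.Injective p)]
  have h0 : (∑ p ∈ univ.filter (fun p : Fin j → Fin N => ¬ Function.Injective p),
      (∏ i, M i (p i)) * (P.submatrix p id).det) = 0 := by
    refine Finset.sum_eq_zero fun p hp => ?_
    rw [Finset.mem_filter] at hp
    simp only [Function.Injective] at hp
    push_neg at hp
    obtain ⟨a, b, hab, hne⟩ := hp.2
    rw [Matrix.det_zero_of_row_eq hne (funext fun c => by simp [Matrix.submatrix_apply, hab]),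
      mul_zero]
  rw [h0, add_zero]
  -- reindex the injective sum by (subset, permutation) pairs
  have hbij : (∑ x : {s : Finset (Fin N) // s.card = j} × Perm (Fin j),
      (∏ i, M i ((x.1.1.orderIsoOfFin x.1.2) (x.2 i))) *
        (P.submatrix (fun i => ((x.1.1.orderIsoOfFin x.1.2) (x.2 i) : Fin N)) id).det)
      = ∑ p ∈ univ.filter (fun p : Fin j → Fin N => Function.Injective p),
        (∏ i, M i (p i)) * (P.submatrix p id).det := by
    refine Finset.sum_bij (fun x _ => fun i => ((x.1.1.orderIsoOfFin x.1.2) (x.2 i) : Fin N))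
      ?_ ?_ ?_ ?_
    · intro x _
      simp only [mem_filter, mem_univ, true_and]
      intro a b hab
      exact x.2.injective ((x.1.1.orderIsoOfFin x.1.2).injective (Subtype.ext hab))
    · rintro ⟨s, σ⟩ _ ⟨t, τ⟩ _ h
      have hst : s = t := by
        apply Subtype.ext
        rw [← image_phi s σ, ← image_phi t τ]
        exact Finset.image_congr (fun i _ => congrFun h i)
      subst hst
      refine Prod.ext rfl (Equiv.ext fun i => ?_)
      exact (s.1.orderIsoOfFin s.2).injective (Subtype.ext (congrFun h i))
    · intro p hp
      simp only [mem_filter, mem_univ, true_and] at hp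
      have hs : (univ.image p).card = j := by
        rw [Finset.card_image_of_injective _ hp, card_univ, Fintype.card_fin]
      set e := (univ.image p).orderIsoOfFin hs with he
      have hmem : ∀ i, p i ∈ univ.image p := fun i => Finset.mem_image_of_mem p (mem_univ i)
      have hginj : Function.Injective (fun i => e.symm ⟨p i, hmem i⟩) := by
        intro a b hab
        have h2 := e.symm.injective hab
        exact hp (Subtype.ext_iff.mp h2)
      refine ⟨⟨⟨univ.image p, hs⟩, Equiv.ofBijective _
        (Finite.injective_iff_bijective.mp hginj)⟩, mem_univ _, ?_⟩
      funext i
      simp [Equiv.ofBijective_apply]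
      exact congrArg Subtype.val (e.apply_symm_apply ⟨p i, hmem i⟩)
    · intro x _
      rfl
  rw [← hbij, Fintype.sum_prod_type]
  refine Fintype.sum_congr _ _ fun s => ?_
  -- inner sum over permutations
  have perm_det : ∀ σ : Perm (Fin j),
      (P.submatrix (fun i => ((s.1.orderIsoOfFin s.2) (σ i) : Fin N)) id).det
        = (Equiv.Perm.sign σ : ℝ) *
          (P.submatrix (fun i => ((s.1.orderIsoOfFin s.2) i : Fin N)) id).det := by
    intro σ
    have := Matrix.det_permute σ (P.submatrix (fun i => ((s.1.orderIsoOfFin s.2) i : Fin N)) id)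
    simpa [Function.comp_def] using this
  calc (∑ σ : Perm (Fin j), (∏ i, M i ((s.1.orderIsoOfFin s.2) (σ i))) *
        (P.submatrix (fun i => ((s.1.orderIsoOfFin s.2) (σ i) : Fin N)) id).det)
      = (∑ σ : Perm (Fin j), (Equiv.Perm.sign σ : ℝ) *
          ∏ i, (M.submatrix id fun i => ((s.1.orderIsoOfFin s.2) i : Fin N)) i (σ i)) *
        (P.submatrix (fun i => ((s.1.orderIsoOfFin s.2) i : Fin N)) id).det := by
        rw [Finset.sum_mul]
        refine Fintype.sum_congr _ _ fun σ => ?_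
        rw [perm_det σ]
        simp only [Matrix.submatrix_apply, id]
        ring
    _ = _ := by
        congr 1
        rw [← Matrix.det_transpose, Matrix.det_apply']
        refine Fintype.sum_congr _ _ fun σ => ?_
        simp [Matrix.transpose_apply, Matrix.submatrix_apply]

section CBhelp
open Finset

lemma CB_submatrix_mul {j N : ℕ} (A B : Matrix (Fin N) (Fin N) ℝ) (f g : Fin j → Fin N) :
    (A * B).submatrix f g = (A.submatrix f id) * (B.submatrix id g) := by
  ext i c; simp [Matrix.mul_apply]

end CBhelp

lemma STP.det_submatrix_pos {B : Matrix (Fin n) (Fin n) ℝ} (hB : STP B) {j : ℕ}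
    (hj : 0 < j) (s c : Finset (Fin n)) (hs : s.card = j) (hc : c.card = j) :
    0 < (B.submatrix (fun i : Fin j => ((s.orderIsoOfFin hs) i).1)
          (fun i : Fin j => ((c.orderIsoOfFin hc) i).1)).det := by
  subst hs
  have hcc : c.card = s.card := hc
  have := hB s c hcc (Finset.card_pos.mp hj)
  exact this

lemma STP.mul {A B : Matrix (Fin n) (Fin n) ℝ} (hA : STP A) (hB : STP B) : STP (A * B) := by
  intro r c h hne
  have hj : 0 < r.card := Finset.card_pos.mpr hne
  unfold minor
  rw [CB_submatrix_mul, cauchyBinet]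
  have hNe : Nonempty {s : Finset (Fin n) // s.card = r.card} := ⟨⟨r, rfl⟩⟩
  refine Finset.sum_pos (fun s _ => mul_pos ?_ ?_) Finset.univ_nonempty
  · have := hA.det_submatrix_pos hj r s.1 rfl s.2
    exact this
  · have := hB.det_submatrix_pos hj s.1 c s.2 h
    exact this

/-- the product of two commuting eventually strictly totally positive
matrices is eventually strictly totally positive. -/
theorem stmt10 (A B : Matrix (Fin n) (Fin n) ℝ)
    (hA : ESTP A) (hB : ESTP B) (hcomm : A * B = B * A) :
    ESTP (A * B) := by
  obtain ⟨a, ha⟩ := hA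
  obtain ⟨b, hb⟩ := hB
  refine ⟨max a b, fun k hk => ?_⟩
  rw [Commute.mul_pow (hcomm : Commute A B)]
  exact (ha k (le_trans (le_max_left a b) hk)).mul (hb k (le_trans (le_max_right a b) hk))
end

section
/- If an invertible n×n matrix S and its inverse S⁻¹ are both totally nonnegative (all minors ≥ 0), then S is a positive diagonal matrix. -/
open Matrix Polynomial Filter

variable {n : ℕ}

section Helpers

lemma pair_card {a b : Fin n} (hab : a < b) : ({a, b} : Finset (Fin n)).card = 2 := by
  rw [Finset.card_insert_of_notMem (by simp [hab.ne]), Finset.card_singleton]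

lemma pair_iso_zero {a b : Fin n} (hab : a < b) {k : ℕ}
    (hk : ({a, b} : Finset (Fin n)).card = k) (i : Fin k) (hi : (i : ℕ) = 0) :
    ((({a, b} : Finset (Fin n)).orderIsoOfFin hk i : Fin n)) = a := by
  have hmem := (({a, b} : Finset (Fin n)).orderIsoOfFin hk i).2
  simp only [Finset.mem_insert, Finset.mem_singleton] at hmem
  rcases hmem with h | h
  · exact h
  · exfalso
    have hk2 : k = 2 := by rw [← hk, pair_card hab]
    have hj : (1 : ℕ) < k := by omega
    set j : Fin k := ⟨1, hj⟩
    have hlt : i < j := by rw [Fin.lt_def, hi]; exact Nat.zero_lt_one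
    have hmono := Subtype.coe_lt_coe.mpr
      ((({a, b} : Finset (Fin n)).orderIsoOfFin hk).strictMono hlt)
    rw [h] at hmono
    have hmem2 := (({a, b} : Finset (Fin n)).orderIsoOfFin hk j).2
    simp only [Finset.mem_insert, Finset.mem_singleton] at hmem2
    rcases hmem2 with h2 | h2 <;> rw [h2] at hmono
    · exact absurd (hab.trans hmono) (lt_irrefl a)
    · exact lt_irrefl _ hmono

lemma pair_iso_one {a b : Fin n} (hab : a < b) {k : ℕ}
    (hk : ({a, b} : Finset (Fin n)).card = k) (i : Fin k) (hi : (i : ℕ) = 1) :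
    ((({a, b} : Finset (Fin n)).orderIsoOfFin hk i : Fin n)) = b := by
  have hmem := (({a, b} : Finset (Fin n)).orderIsoOfFin hk i).2
  simp only [Finset.mem_insert, Finset.mem_singleton] at hmem
  rcases hmem with h | h
  · exfalso
    have hj : (0 : ℕ) < k := by omega
    set j : Fin k := ⟨0, hj⟩
    have hlt : j < i := by rw [Fin.lt_def, hi]; exact Nat.zero_lt_one
    have hmono := Subtype.coe_lt_coe.mpr
      ((({a, b} : Finset (Fin n)).orderIsoOfFin hk).strictMono hlt)
    rw [h] at hmono
    have hmem2 := (({a, b} : Finset (Fin n)).orderIsoOfFin hk j).2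
    simp only [Finset.mem_insert, Finset.mem_singleton] at hmem2
    rcases hmem2 with h2 | h2 <;> rw [h2] at hmono
    · exact lt_irrefl a hmono
    · exact absurd (hab.trans hmono) (lt_irrefl a)
  · exact h

lemma minor_single (A : Matrix (Fin n) (Fin n) ℝ) (i j : Fin n)
    (h : ({j} : Finset (Fin n)).card = ({i} : Finset (Fin n)).card) :
    minor A {i} {j} h = A i j := by
  unfold minor
  rw [show (A.submatrix
        (fun k : Fin ({i} : Finset (Fin n)).card =>
          ((({i} : Finset (Fin n)).orderIsoOfFin rfl k).1))
        (fun k : Fin ({i} : Finset (Fin n)).card =>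
          ((({j} : Finset (Fin n)).orderIsoOfFin h k).1))).det
      = (A.submatrix
        (fun k : Fin 1 => ((({i} : Finset (Fin n)).orderIsoOfFin rfl k).1))
        (fun k : Fin 1 => ((({j} : Finset (Fin n)).orderIsoOfFin h k).1))).det from rfl]
  rw [Matrix.det_fin_one]
  have e1 : ∀ k : Fin 1, ((({i} : Finset (Fin n)).orderIsoOfFin rfl k) : Fin n) = i :=
    fun k => Finset.mem_singleton.mp (({i} : Finset (Fin n)).orderIsoOfFin rfl k).2
  have e2 : ∀ k : Fin 1, ((({j} : Finset (Fin n)).orderIsoOfFin h k) : Fin n) = j :=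
    fun k => Finset.mem_singleton.mp (({j} : Finset (Fin n)).orderIsoOfFin h k).2
  rw [Matrix.submatrix_apply, e1, e2]

lemma minor_pair (A : Matrix (Fin n) (Fin n) ℝ) {a b c d : Fin n} (hab : a < b) (hcd : c < d)
    (h : ({c, d} : Finset (Fin n)).card = ({a, b} : Finset (Fin n)).card) :
    minor A {a, b} {c, d} h = A a c * A b d - A a d * A b c := by
  have h2 : ({a, b} : Finset (Fin n)).card = 2 := pair_card hab
  unfold minor
  rw [← Matrix.det_submatrix_equiv_self (finCongr h2).symm, Matrix.det_fin_two]
  simp only [Matrix.submatrix_apply]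
  rw [pair_iso_zero hab rfl _ (by simp), pair_iso_one hab rfl _ (by simp),
      pair_iso_zero hcd h _ (by simp), pair_iso_one hcd h _ (by simp)]

/-- If two distinct rows of a square matrix are supported in a single common column,
the determinant vanishes. -/
lemma det_eq_zero_two_rows (M : Matrix (Fin n) (Fin n) ℝ) {k l : Fin n} (hkl : k ≠ l)
    {i : Fin n} (hk : ∀ j, j ≠ i → M k j = 0) (hl : ∀ j, j ≠ i → M l j = 0) :
    M.det = 0 := by
  by_cases h0 : M k i = 0
  · exact Matrix.det_eq_zero_of_row_eq_zero k fun j => by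
      by_cases hj : j = i
      · rw [hj]; exact h0
      · exact hk j hj
  · rw [← Matrix.exists_vecMul_eq_zero_iff]
    refine ⟨Pi.single k (M l i) - Pi.single l (M k i), ?_, ?_⟩
    · intro hv
      have := congrFun hv l
      simp [Pi.single_apply, hkl.symm] at this
      exact h0 this
    · have : (Pi.single k (M l i) - Pi.single l (M k i)) ᵥ* M
          = (fun j => M l i * M k j) - fun j => M k i * M l j := by
        rw [Matrix.sub_vecMul, Matrix.single_vecMul, Matrix.single_vecMul]; rfl
      rw [this]
      funext j
      by_cases hj : j = i
      · subst hj; simp [mul_comm]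
      · simp [hk j hj, hl j hj]

end Helpers

/-- if `S` and `S⁻¹` are both totally nonnegative then `S` is a
positive diagonal matrix. -/
theorem stmt15 (S : Matrix (Fin n) (Fin n) ℝ) (hS : IsUnit S.det)
    (h1 : TotNonneg S) (h2 : TotNonneg S⁻¹) :
    ∃ d : Fin n → ℝ, (∀ i, 0 < d i) ∧ S = diagonal d := by
  classical
  have hmul : S * S⁻¹ = 1 := Matrix.mul_nonsing_inv S hS
  have hdetS : S.det ≠ 0 := hS.ne_zero
  have hdetT : (S⁻¹).det ≠ 0 := by
    have : (S⁻¹).det * S.det = 1 := by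
      rw [← Matrix.det_mul, Matrix.nonsing_inv_mul S hS, Matrix.det_one]
    exact left_ne_zero_of_mul_eq_one this
  -- entrywise nonnegativity from 1×1 minors
  have hSnn : ∀ i j, 0 ≤ S i j := fun i j => by
    have := h1 {i} {j} (by simp)
    rwa [minor_single] at this
  have hTnn : ∀ i j, 0 ≤ S⁻¹ i j := fun i j => by
    have := h2 {i} {j} (by simp)
    rwa [minor_single] at this
  -- off-diagonal products vanish
  have hterm : ∀ i j, i ≠ j → ∀ k, S i k * S⁻¹ k j = 0 := by
    intro i j hij k
    have hsum : ∑ m, S i m * S⁻¹ m j = 0 := by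
      have hij' := congrFun (congrFun hmul i) j
      rw [Matrix.mul_apply] at hij'
      simpa [Matrix.one_apply, hij] using hij'
    exact (Finset.sum_eq_zero_iff_of_nonneg
      (fun m _ => mul_nonneg (hSnn i m) (hTnn m j))).mp hsum k (Finset.mem_univ k)
  -- each row of S has at most one nonzero entry
  have hrow : ∀ i k l, S i k ≠ 0 → S i l ≠ 0 → k = l := by
    intro i k l hk hl
    by_contra hkl
    have hTk : ∀ j, j ≠ i → S⁻¹ k j = 0 := by
      intro j hj
      rcases mul_eq_zero.mp (hterm i j (Ne.symm hj) k) with h | h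
      · exact absurd h hk
      · exact h
    have hTl : ∀ j, j ≠ i → S⁻¹ l j = 0 := by
      intro j hj
      rcases mul_eq_zero.mp (hterm i j (Ne.symm hj) l) with h | h
      · exact absurd h hl
      · exact h
    exact hdetT (det_eq_zero_two_rows S⁻¹ hkl hTk hTl)
  -- each row of S has at least one nonzero entry
  have hex : ∀ i, ∃ k, S i k ≠ 0 := by
    intro i
    by_contra hc
    push_neg at hc
    exact hdetS (Matrix.det_eq_zero_of_row_eq_zero i hc)
  set σ : Fin n → Fin n := fun i => (hex i).choose with hσdef
  have hσ : ∀ i, S i (σ i) ≠ 0 := fun i => (hex i).choose_spec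
  have hσpos : ∀ i, 0 < S i (σ i) := fun i => lt_of_le_of_ne (hSnn _ _) (Ne.symm (hσ i))
  have hoff : ∀ i j, j ≠ σ i → S i j = 0 := by
    intro i j hj
    by_contra hc
    exact hj (hrow i j (σ i) hc (hσ i))
  have hinj : Function.Injective σ := by
    intro i i' heq
    by_contra hii'
    have hki : ∀ j, j ≠ σ i → S i j = 0 := fun j hj => hoff i j hj
    have hki' : ∀ j, j ≠ σ i → S i' j = 0 := fun j hj => hoff i' j (by rw [← heq]; exact hj)
    exact hdetS (det_eq_zero_two_rows S hii' hki hki')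
  have hmono : StrictMono σ := by
    intro i i' hlt
    rcases lt_trichotomy (σ i) (σ i') with h | h | h
    · exact h
    · exact absurd (hinj h) (ne_of_lt hlt)
    · exfalso
      have hcard : ({σ i', σ i} : Finset (Fin n)).card = ({i, i'} : Finset (Fin n)).card := by
        rw [pair_card h, pair_card hlt]
      have hm := h1 {i, i'} {σ i', σ i} hcard
      rw [minor_pair S hlt h] at hm
      have e1 : S i (σ i') = 0 := hoff i (σ i') (fun hc => absurd (hinj hc.symm) (ne_of_lt hlt))
      have e2 : S i' (σ i) = 0 := hoff i' (σ i) (fun hc => absurd (hinj hc) (ne_of_gt hlt).symm)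
      rw [e1, e2] at hm
      nlinarith [hσpos i, hσpos i']
  have hsurj : Function.Surjective σ := Finite.surjective_of_injective hinj
  have hid : ∀ i, σ i = i := by
    intro i
    have hsub := Subsingleton.elim (StrictMono.orderIsoOfSurjective σ hmono hsurj)
      (OrderIso.refl (Fin n))
    have := congrFun (StrictMono.coe_orderIsoOfSurjective σ hmono hsurj) i
    rw [hsub] at this
    simpa using this.symm
  refine ⟨fun i => S i i, fun i => ?_, ?_⟩
  · have := hσpos i
    rwa [hid i] at this
  · ext i j
    by_cases hij : i = j
    · subst hij; rw [Matrix.diagonal_apply_eq]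
    · rw [Matrix.diagonal_apply_ne _ hij]
      exact hoff i j (by rw [hid i]; exact fun h => hij h.symm)
end
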